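/- Let x₁, x₂ ∈ ℂ and let ζ₁ ≠ ζ₂ be two distinct complex roots of the cubic equation 4ζ³ + 2x₂ζ + x₁ = 0. Then the quantity F = (ζ₁ − ζ₂)(3x₁ + 2x₂(ζ₁ + ζ₂)) satisfies the sextic equation 16F⁶ + 32x₂(27x₁² − x₂³)F⁴ + 16x₂²(27x₁² − x₂³)²F² + x₁²(27x₁² + 8x₂³)³ = 0. -/
import Mathlib

/-- For two distinct roots `ζ₁ ≠ ζ₂` of the cubic `4ζ³ + 2x₂ζ + x₁ = 0`, the quantity
`F = (ζ₁ − ζ₂)(3x₁ + 2x₂(ζ₁ + ζ₂))` satisfies the sextic equation describing the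
Stokes set of the Pearcey system. -/
theorem pearcey_stokes_sextic
    (x₁ x₂ ζ₁ ζ₂ : ℂ) (hne : ζ₁ ≠ ζ₂)
    (h1 : 4 * ζ₁ ^ 3 + 2 * x₂ * ζ₁ + x₁ = 0)
    (h2 : 4 * ζ₂ ^ 3 + 2 * x₂ * ζ₂ + x₁ = 0) :
    16 * ((ζ₁ - ζ₂) * (3 * x₁ + 2 * x₂ * (ζ₁ + ζ₂))) ^ 6
      + 32 * x₂ * (27 * x₁ ^ 2 - x₂ ^ 3)
          * ((ζ₁ - ζ₂) * (3 * x₁ + 2 * x₂ * (ζ₁ + ζ₂))) ^ 4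
      + 16 * x₂ ^ 2 * (27 * x₁ ^ 2 - x₂ ^ 3) ^ 2
          * ((ζ₁ - ζ₂) * (3 * x₁ + 2 * x₂ * (ζ₁ + ζ₂))) ^ 2
      + x₁ ^ 2 * (27 * x₁ ^ 2 + 8 * x₂ ^ 3) ^ 3 = 0 := by
  have hd : ζ₁ - ζ₂ ≠ 0 := sub_ne_zero.mpr hne
  have hx2 : x₂ = -2 * (ζ₁ ^ 2 + ζ₁ * ζ₂ + ζ₂ ^ 2) := by
    have h3 : (ζ₁ - ζ₂) * (2 * x₂ + 4 * (ζ₁ ^ 2 + ζ₁ * ζ₂ + ζ₂ ^ 2)) = 0 := by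
      linear_combination h1 - h2
    rcases mul_eq_zero.mp h3 with h | h
    · exact absurd h hd
    · linear_combination h / 2
  have hx1 : x₁ = -4 * ζ₁ ^ 3 - 2 * x₂ * ζ₁ := by linear_combination h1
  subst hx1 hx2
  ring
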